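/- For n ≥ 3, the Lucas atom P_n(1,1) is even if and only if n = 3·2^m for some m ≥ 0. Equivalently, using Fibonacci numbers F_n = {n}_{1,1} and the factorization F_n = ∏_{d|n} P_d(1,1): the Fibonacci atoms P_n(1,1) are even exactly for n ∈ {3, 6, 12, 24, ...}. -/

import Mathlib

open MvPolynomial Polynomial

lemma cyc_root_iff_aux {K : Type*} [Field K] [CharP K 2] {ω : K} (hω : IsPrimitiveRoot ω 3) :
    ∀ n : ℕ, n ≠ 0 → ((Polynomial.cyclotomic n K).IsRoot ω ↔ ∃ m : ℕ, n = 3 * 2 ^ m) := by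
  have hfact : Fact (Nat.Prime 2) := ⟨Nat.prime_two⟩
  intro n
  induction n using Nat.strong_induction_on with
  | _ n ih =>
    intro hn0
    by_cases h2 : 2 ∣ n
    · obtain ⟨n', rfl⟩ := h2
      have hn' : n' ≠ 0 := by rintro rfl; simp at hn0
      have key : (cyclotomic (2 * n') K).IsRoot ω ↔ (cyclotomic n' K).IsRoot ω := by
        by_cases hd : 2 ∣ n'
        · rw [mul_comm, cyclotomic_mul_prime_dvd_eq_pow K hd, IsRoot.def, Polynomial.eval_pow,
            pow_eq_zero_iff (by norm_num), IsRoot.def]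
        · rw [mul_comm, cyclotomic_mul_prime_eq_pow_of_not_dvd K hd, IsRoot.def, Polynomial.eval_pow,
            pow_eq_zero_iff (by norm_num), IsRoot.def]
      rw [key, ih n' (by omega) hn']
      constructor
      · rintro ⟨m, rfl⟩; exact ⟨m + 1, by ring⟩
      · rintro ⟨m, hm⟩
        rcases m with _ | m
        · simp at hm; omega
        · rw [pow_succ] at hm; exact ⟨m, by omega⟩
    · have : NeZero (n : K) := ⟨by
        rw [Ne, CharP.cast_eq_zero_iff K 2 n]; exact h2⟩
      rw [Polynomial.isRoot_cyclotomic_iff]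
      constructor
      · intro h
        have h1 := h.eq_orderOf
        have h3 := hω.eq_orderOf
        exact ⟨0, by omega⟩
      · rintro ⟨m, rfl⟩
        rcases m with _ | m
        · simpa using hω
        · exact absurd ⟨3 * 2 ^ m, by ring⟩ h2

theorem lucas_atom_one_one_even_iff (n : ℕ) (hn : 3 ≤ n)
    (P : MvPolynomial (Fin 2) ℤ)
    (hform : ∀ m : Fin 2 →₀ ℕ, P.coeff m ≠ 0 → m 0 + 2 * m 1 = Nat.totient n)
    (heval : MvPolynomial.aeval ![1 + Polynomial.X, -Polynomial.X] P =
      Polynomial.cyclotomic n ℤ) :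
    2 ∣ MvPolynomial.eval ![1, 1] P ↔ ∃ m : ℕ, n = 3 * 2 ^ m := by
  have hfact : Fact (Nat.Prime 2) := ⟨Nat.prime_two⟩
  set K := GaloisField 2 2 with hK
  -- construct a primitive cube root of unity in K
  have hcard : Nat.card K = 4 := by
    rw [GaloisField.card 2 2 (by norm_num)]; norm_num
  have hcardu : Nat.card Kˣ = 3 := by
    rw [Nat.card_units, hcard]
  obtain ⟨g, hg⟩ := IsCyclic.exists_ofOrder_eq_natCard (α := Kˣ)
  rw [hcardu] at hg
  set ω : K := (g : K) with hωdef
  have horder : orderOf ω = 3 := by rw [hωdef, orderOf_units, hg]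
  have hprim : IsPrimitiveRoot ω 3 := horder ▸ IsPrimitiveRoot.orderOf ω
  have hω0 : ω ≠ 0 := g.ne_zero
  have hω1 : ω ≠ 1 := hprim.ne_one (by norm_num)
  have hω3 : ω ^ 3 = 1 := hprim.pow_eq_one
  have hsum : ω ^ 2 + ω + 1 = 0 := by
    have h0 : (ω - 1) * (ω ^ 2 + ω + 1) = ω ^ 3 - 1 := by ring
    rw [hω3, sub_self] at h0
    rcases mul_eq_zero.mp h0 with h | h
    · exact absurd (sub_eq_zero.mp h) hω1
    · exact h
  have hneg : -ω = ω := CharTwo.neg_eq ω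
  have hsq : (1 : K) + ω = ω ^ 2 := by
    have := CharTwo.neg_eq (ω ^ 2)
    linear_combination hsum + this
  have hω4 : ω = ω ^ 4 := by
    have : ω ^ 4 = ω ^ 3 * ω := by ring
    rw [this, hω3, one_mul]
  -- evaluate heval at ω
  have h1 : MvPolynomial.aeval (fun i => (Polynomial.aeval ω : Polynomial ℤ →ₐ[ℤ] K) (![1 + Polynomial.X, -Polynomial.X] i)) P
      = (Polynomial.cyclotomic n K).eval ω := by
    rw [← MvPolynomial.comp_aeval_apply, heval, Polynomial.aeval_def, ← Polynomial.eval_map,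
      map_cyclotomic]
  have hfun : (fun i => (Polynomial.aeval ω : Polynomial ℤ →ₐ[ℤ] K) (![1 + Polynomial.X, -Polynomial.X] i))
      = ![ω ^ 2, ω ^ 4] := by
    funext i
    fin_cases i
    · simp [hsq]
    · simp [hneg, ← hω4]
  rw [hfun] at h1
  -- homogeneity
  have hhom : MvPolynomial.aeval ![ω ^ 2, ω ^ 4] P
      = ω ^ (2 * Nat.totient n) * ((MvPolynomial.eval ![1, 1] P : ℤ) : K) := by
    have hR : ((MvPolynomial.eval ![1, 1] P : ℤ) : K)
        = ∑ d ∈ P.support, ((P.coeff d : ℤ) : K) := by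
      rw [MvPolynomial.eval_eq']
      rw [Int.cast_sum]
      apply Finset.sum_congr rfl
      intro d _
      rw [Fin.prod_univ_two]
      simp
    rw [MvPolynomial.aeval_def, MvPolynomial.eval₂_eq', hR, Finset.mul_sum]
    apply Finset.sum_congr rfl
    intro d hd
    have hw := hform d (MvPolynomial.mem_support_iff.mp hd)
    rw [Fin.prod_univ_two]
    show ((P.coeff d : ℤ) : K) * ((ω ^ 2) ^ d 0 * (ω ^ 4) ^ d 1) = _
    rw [← pow_mul, ← pow_mul, ← pow_add,
      show 2 * d 0 + 4 * d 1 = 2 * Nat.totient n by omega]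
    ring
  rw [hhom] at h1
  -- combine
  have hkey : (2 : ℤ) ∣ MvPolynomial.eval ![1, 1] P ↔ (Polynomial.cyclotomic n K).IsRoot ω := by
    rw [Polynomial.IsRoot.def, ← h1, mul_eq_zero]
    constructor
    · intro h
      right
      rwa [CharP.intCast_eq_zero_iff K 2, Nat.cast_ofNat]
    · rintro (h | h)
      · exact absurd h (pow_ne_zero _ hω0)
      · rwa [CharP.intCast_eq_zero_iff K 2, Nat.cast_ofNat] at h
  rw [hkey, cyc_root_iff_aux hprim n (by omega)]
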